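/- Let g : ℝ → ℝ be three times continuously differentiable, let κ ∈ ℝ, and suppose g(0) = 0 and g''(0) = -κ·g'(0). Let s ≠ 0 with 1 - κs/2 ≠ 0, let t ∈ ℝ, and let M be an upper bound for |g'''| on the closed interval containing 0, s, and t. Then |g(t) - (t·(1 - κt/2))/(s·(1 - κs/2))·g(s)| ≤ (M/6)·( |t|³ + |t|·|1 - κt/2|·s²/|1 - κs/2| ). -/

import Mathlib

open Set

lemma iterDW_eq (g : ℝ → ℝ) (hg : ContDiff ℝ 3 g) {a b : ℝ} (hab : a < b) :
    ∀ n ≤ 3, ∀ x ∈ Icc a b,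
    iteratedDerivWithin n g (Icc a b) x = iteratedDeriv n g x := by
  intro n
  induction n with
  | zero => intro _ x hx; simp
  | succ n ih =>
    intro hn x hx
    rw [iteratedDerivWithin_succ,
      derivWithin_congr (fun y hy => ih (by omega) y hy) (ih (by omega) x hx),
      iteratedDeriv_succ]
    exact ((hg.differentiable_iteratedDeriv n
      (by exact_mod_cast (show n < 3 by omega))) x).derivWithin
      (uniqueDiffOn_Icc hab x hx)

lemma taylor3_pos (g : ℝ → ℝ) (hg : ContDiff ℝ 3 g) {x : ℝ} (hx : 0 < x) (M : ℝ)
    (hM : ∀ y ∈ Icc (min 0 x) (max 0 x), |deriv (deriv (deriv g)) y| ≤ M) :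
    |g x - (g 0 + deriv g 0 * x + deriv (deriv g) 0 * x ^ 2 / 2)| ≤ M * |x| ^ 3 / 6 := by
  have key := iterDW_eq g hg hx
  have hf : ContDiffOn ℝ 2 g (Icc 0 x) := (hg.of_le (by norm_num)).contDiffOn
  have hf' : DifferentiableOn ℝ (iteratedDerivWithin 2 g (Icc 0 x)) (Ioo 0 x) := by
    apply DifferentiableOn.congr
      (f := iteratedDeriv 2 g)
      ((hg.differentiable_iteratedDeriv 2 (by norm_num)).differentiableOn)
    intro y hy
    exact key 2 (by norm_num) y (Ioo_subset_Icc_self hy)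
  have hu : uIcc 0 x = Icc 0 x := uIcc_of_le hx.le
  have hu' : uIoo 0 x = Ioo 0 x := uIoo_of_le hx.le
  obtain ⟨x', hx', heq⟩ := taylor_mean_remainder_lagrange (n := 2) hx.ne
    (by rw [hu]; exact hf) (by rw [hu, hu']; exact hf')
  rw [hu] at heq
  rw [hu'] at hx'
  have hT : taylorWithinEval g 2 (Icc 0 x) 0 x
      = g 0 + deriv g 0 * x + deriv (deriv g) 0 * x ^ 2 / 2 := by
    rw [taylor_within_apply]
    have h0 : (0:ℝ) ∈ Icc 0 x := ⟨le_refl _, hx.le⟩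
    rw [Finset.sum_range_succ, Finset.sum_range_succ, Finset.sum_range_one,
      key 0 (by norm_num) 0 h0, key 1 (by norm_num) 0 h0, key 2 (by norm_num) 0 h0]
    simp [iteratedDeriv_succ, iteratedDeriv_one, Nat.factorial]
    ring
  rw [hT] at heq
  have h3 : iteratedDerivWithin 3 g (Icc 0 x) x'
      = deriv (deriv (deriv g)) x' := by
    rw [key 3 le_rfl x' (Ioo_subset_Icc_self hx')]
    simp [iteratedDeriv_succ, iteratedDeriv_one]
  have hb : |deriv (deriv (deriv g)) x'| ≤ M := by
    apply hM
    constructor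
    · exact le_trans (min_le_left _ _) hx'.1.le
    · exact le_trans hx'.2.le (le_max_right _ _)
  rw [heq, h3]
  have : |deriv (deriv (deriv g)) x' * (x - 0) ^ 3 / ↑(Nat.factorial 3)|
      = |deriv (deriv (deriv g)) x'| * |x| ^ 3 / 6 := by
    rw [abs_div, abs_mul, abs_pow, sub_zero]
    norm_num [Nat.factorial]
  rw [this]
  have hx3 : (0:ℝ) ≤ |x| ^ 3 / 6 := by positivity
  calc |deriv (deriv (deriv g)) x'| * |x| ^ 3 / 6
      = |deriv (deriv (deriv g)) x'| * (|x| ^ 3 / 6) := by ring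
    _ ≤ M * (|x| ^ 3 / 6) := mul_le_mul_of_nonneg_right hb hx3
    _ = M * |x| ^ 3 / 6 := by ring


lemma taylor3 (g : ℝ → ℝ) (hg : ContDiff ℝ 3 g) (x M : ℝ)
    (hM : ∀ y ∈ Icc (min 0 x) (max 0 x), |deriv (deriv (deriv g)) y| ≤ M) :
    |g x - (g 0 + deriv g 0 * x + deriv (deriv g) 0 * x ^ 2 / 2)| ≤ M * |x| ^ 3 / 6 := by
  rcases lt_trichotomy x 0 with hx | rfl | hx
  · have hgc : ContDiff ℝ 3 (fun y => g (-y)) := hg.comp contDiff_neg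
    have d1 : deriv (fun y => g (-y)) = fun y => -deriv g (-y) :=
      funext fun y => deriv_comp_neg g y
    have d2 : deriv (deriv (fun y => g (-y))) = fun y => deriv (deriv g) (-y) := by
      rw [d1]; funext y
      rw [deriv.fun_neg, deriv_comp_neg, neg_neg]
    have d3 : deriv (deriv (deriv (fun y => g (-y))))
        = fun y => -deriv (deriv (deriv g)) (-y) := by
      rw [d2]; funext y
      exact deriv_comp_neg _ y
    have hM' : ∀ y ∈ Icc (min 0 (-x)) (max 0 (-x)),
        |deriv (deriv (deriv (fun y => g (-y)))) y| ≤ M := by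
      intro y hy
      rw [d3]
      simp only [abs_neg]
      apply hM
      rw [min_eq_left (by linarith), max_eq_right (by linarith)] at hy
      rw [min_eq_right hx.le, max_eq_left hx.le]
      exact ⟨by linarith [hy.2], by linarith [hy.1]⟩
    have e1 : deriv (fun y => g (-y)) 0 = -deriv g 0 := by rw [d1]; simp
    have e2 : deriv (deriv (fun y => g (-y))) 0 = deriv (deriv g) 0 := by rw [d2]; simp
    have := taylor3_pos (fun y => g (-y)) hgc (show 0 < -x by linarith) M hM'
    simp only [e1, e2, neg_neg, abs_neg] at this
    convert this using 2
    ring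
  · simp
  · exact taylor3_pos g hg hx M hM

/-- One-dimensional form of the third-order ghost value reconstruction: if
`g(0) = 0` and `g''(0) = -κ·g'(0)`, then the ghost value `g(t)` is reconstructed
from the single interior value `g(s)` via
`g(t) ≈ (t(1 - κt/2))/(s(1 - κs/2))·g(s)`, with error controlled by the third
derivative. -/
theorem ghost_value_reconstruction
    (g : ℝ → ℝ) (hg : ContDiff ℝ 3 g) (κ : ℝ)
    (h0 : g 0 = 0) (h2 : deriv (deriv g) 0 = -κ * deriv g 0)
    (s : ℝ) (hs : s ≠ 0) (hκs : 1 - κ * s / 2 ≠ 0) (t : ℝ)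
    (M : ℝ)
    (hM : ∀ x ∈ Icc (min 0 (min s t)) (max 0 (max s t)),
      |deriv (deriv (deriv g)) x| ≤ M) :
    |g t - (t * (1 - κ * t / 2)) / (s * (1 - κ * s / 2)) * g s|
      ≤ (M / 6) * (|t| ^ 3 + |t| * |1 - κ * t / 2| * s ^ 2 / |1 - κ * s / 2|) := by
  have hsub : ∀ x : ℝ, x = s ∨ x = t →
      Icc (min 0 x) (max 0 x) ⊆ Icc (min 0 (min s t)) (max 0 (max s t)) := by
    intro x hx
    apply Icc_subset_Icc
    · rcases hx with rfl | rfl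
      · exact min_le_min le_rfl (min_le_left _ _)
      · exact min_le_min le_rfl (min_le_right _ _)
    · rcases hx with rfl | rfl
      · exact max_le_max le_rfl (le_max_left _ _)
      · exact max_le_max le_rfl (le_max_right _ _)
  have Es := taylor3 g hg s M (fun y hy => hM y (hsub s (Or.inl rfl) hy))
  have Et := taylor3 g hg t M (fun y hy => hM y (hsub t (Or.inr rfl) hy))
  have HP : ∀ x : ℝ, g 0 + deriv g 0 * x + deriv (deriv g) 0 * x ^ 2 / 2
      = deriv g 0 * (x * (1 - κ * x / 2)) := by
    intro x; rw [h0, h2]; ring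
  rw [HP] at Es Et
  set A := deriv g 0
  set c := (t * (1 - κ * t / 2)) / (s * (1 - κ * s / 2)) with hc
  have hss : s * (1 - κ * s / 2) ≠ 0 := mul_ne_zero hs hκs
  have hkey : g t - c * g s
      = (g t - A * (t * (1 - κ * t / 2))) - c * (g s - A * (s * (1 - κ * s / 2))) := by
    have hce : c * (s * (1 - κ * s / 2)) = t * (1 - κ * t / 2) :=
      div_mul_cancel₀ _ hss
    linear_combination (-A) * hce
  have hM0 : 0 ≤ M := by
    refine le_trans (abs_nonneg _) (hM 0 ⟨min_le_left _ _, le_max_left _ _⟩)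
  have hbound : |g t - c * g s| ≤ M * |t| ^ 3 / 6 + |c| * (M * |s| ^ 3 / 6) := by
    rw [hkey]
    refine le_trans (abs_sub _ _) ?_
    gcongr
    rw [abs_mul]
    exact mul_le_mul_of_nonneg_left Es (abs_nonneg c)
  refine le_trans hbound (le_of_eq ?_)
  have h1 : |c| = |t| * |1 - κ * t / 2| / (|s| * |1 - κ * s / 2|) := by
    rw [hc, abs_div, abs_mul, abs_mul]
  have hsa : |s| ≠ 0 := abs_ne_zero.mpr hs
  have hinv : |s| * |s|⁻¹ = 1 := mul_inv_cancel₀ hsa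
  have key2 : |t| * |1 - κ * t / 2| / (|s| * |1 - κ * s / 2|) * (M * |s| ^ 3 / 6)
      = M / 6 * (|t| * |1 - κ * t / 2| * s ^ 2 / |1 - κ * s / 2|) := by
    linear_combination (M / 6 * |t| * |1 - κ * t / 2| * |1 - κ * s / 2|⁻¹ * |s| ^ 2) * hinv
      + (M / 6 * |t| * |1 - κ * t / 2| * |1 - κ * s / 2|⁻¹) * (sq_abs s)
  rw [h1, key2]
  ring
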